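/- If A is in ARI_{al*al} (A alternal, swap(A) alternal up to addition of a constant-valued mould, and A_1 an even function), then A is invariant under neg∘push. -/

import Mathlib

open List

variable {K : Type*} [Field K] [CharZero K]

/-- The multiset (as a list, with multiplicity) of shuffles of two words. -/
def shuffles {α : Type*} : List α → List α → List (List α)
  | [], v => [v]
  | u, [] => [u]
  | x :: u, y :: v =>
      ((shuffles u (y :: v)).map (x :: ·)) ++ ((shuffles (x :: u) v).map (y :: ·))
  termination_by u v => u.length + v.length

/-- A mould (at the level of evaluations) is alternal if all its shuffle sums over
pairs of nonempty words vanish. -/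
def Alternal (A : List K → K) : Prop :=
  ∀ u v : List K, u ≠ [] → v ≠ [] → ((shuffles u v).map A).sum = 0

/-- mould multiplication `mu`. -/
def mu (A B : List K → K) : List K → K :=
  fun w => ∑ k ∈ Finset.range (w.length + 1), A (w.take k) * B (w.drop k)

/-- `lu(A,B) = mu(A,B) - mu(B,A)`. -/
def lu (A B : List K → K) : List K → K :=
  fun w => mu A B w - mu B A w

/-- All decompositions of a word into two consecutive subwords. -/
def splits2 {α : Type*} (w : List α) : List (List α × List α) :=
  (List.range (w.length + 1)).map fun k => (w.take k, w.drop k)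

/-- All decompositions of a word into three consecutive subwords. -/
def splits3 {α : Type*} (w : List α) : List (List α × List α × List α) :=
  (splits2 w).flatMap fun p => (splits2 p.2).map fun q => (p.1, q.1, q.2)

/-- Add `s` to the first letter of a word. -/
def addFirst (s : K) : List K → List K
  | [] => []
  | x :: xs => (x + s) :: xs

/-- Add `s` to the last letter of a word. -/
def addLast (s : K) : List K → List K
  | [] => []
  | [x] => [x + s]
  | x :: xs => x :: addLast s xs

/-- `amit` for u-moulds: `(amit(B)·A)(w) = Σ_{w=abc, b,c≠∅} A(a⌈c) B(b)`. -/
def amitU (B A : List K → K) : List K → K := fun w =>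
  ((splits3 w).map fun p =>
    match p with
    | (_, [], _) => 0
    | (_, _, []) => 0
    | (a, b, c) => A (a ++ addFirst b.sum c) * B b).sum

/-- `anit` for u-moulds: `(anit(B)·A)(w) = Σ_{w=abc, a,b≠∅} A(a⌉c) B(b)`. -/
def anitU (B A : List K → K) : List K → K := fun w =>
  ((splits3 w).map fun p =>
    match p with
    | ([], _, _) => 0
    | (_, [], _) => 0
    | (a, b, c) => A (addLast b.sum a ++ c) * B b).sum

/-- `arit(B)·A = amit(B)·A - anit(B)·A` on u-moulds. -/
def aritU (B A : List K → K) : List K → K :=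
  fun w => amitU B A w - anitU B A w

/-- the ari bracket on u-moulds. -/
def ariU (A B : List K → K) : List K → K :=
  fun w => aritU B A w + lu A B w - aritU A B w

/-- `amit` for v-moulds. -/
def amitV (B A : List K → K) : List K → K := fun w =>
  ((splits3 w).map fun p =>
    match p with
    | (_, [], _) => 0
    | (_, _, []) => 0
    | (a, b, c0 :: c') => A (a ++ c0 :: c') * B (b.map (fun x => x - c0))).sum

/-- `anit` for v-moulds. -/
def anitV (B A : List K → K) : List K → K := fun w =>
  ((splits3 w).map fun p =>
    match p with
    | ([], _, _) => 0
    | (_, [], _) => 0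
    | (a, b, c) => A (a ++ c) * B (b.map (fun x => x - a.getLastD 0))).sum

/-- `arit(B)·A = amit(B)·A - anit(B)·A` on v-moulds. -/
def aritV (B A : List K → K) : List K → K :=
  fun w => amitV B A w - anitV B A w

/-- the ari bracket on v-moulds. -/
def ariV (A B : List K → K) : List K → K :=
  fun w => aritV B A w + lu A B w - aritV A B w

/-- `neg(A)(u_1,...,u_r) = A(-u_1,...,-u_r)`. -/
def negM (A : List K → K) : List K → K := fun w => A (w.map fun x => -x)

/-- `push(A)(u_1,...,u_r) = A(-u_1-⋯-u_r, u_1, ..., u_{r-1})`. -/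
def pushM (A : List K → K) : List K → K := fun w =>
  match w with
  | [] => A []
  | _ :: _ => A ((-w.sum) :: w.dropLast)

/-- `mantar(A)(u_1,...,u_r) = (-1)^{r-1} A(u_r,...,u_1)`. -/
def mantarM (A : List K → K) : List K → K :=
  fun w => (-1 : K) ^ (w.length + 1) * A w.reverse

/-- argument list for swap from u-moulds to v-moulds:
`(v_1,...,v_r) ↦ (v_r, v_{r-1}-v_r, ..., v_1-v_2)`. -/
def swapUargs (w : List K) : List K :=
  List.zipWith (· - ·) w.reverse (0 :: w.reverse)

/-- argument list for swap from v-moulds to u-moulds: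
`(u_1,...,u_r) ↦ (u_1+⋯+u_r, u_1+⋯+u_{r-1}, ..., u_1)`. -/
def swapVargs (w : List K) : List K :=
  (List.range w.length).map fun i => (w.take (w.length - i)).sum

/-- swap, sending a u-mould to a v-mould. -/
def swapUV (A : List K → K) : List K → K := fun w => A (swapUargs w)

/-- swap, sending a v-mould to a u-mould. -/
def swapVU (A : List K → K) : List K → K := fun w => A (swapVargs w)

/-- A constant-valued mould: its value depends only on the depth. -/
def IsConstantMould (C : List K → K) : Prop :=
  ∀ w w' : List K, w.length = w'.length → C w = C w'


set_option linter.unusedSectionVars false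

lemma shuffles_nil_right {α : Type*} (u : List α) : shuffles u [] = [u] := by
  cases u <;> simp [shuffles]

lemma shuffles_cons_cons {α : Type*} (x y : α) (u v : List α) :
    shuffles (x::u) (y::v)
      = ((shuffles u (y::v)).map (x :: ·)) ++ ((shuffles (x::u) v).map (y :: ·)) := by
  rw [shuffles]

lemma telescope (B : List K → K) (hal : Alternal B) (a : List K) :
    ∀ (x : K) (c : List K),
      ((shuffles a.reverse c).map (fun l => B (x :: l))).sum
        = (-1:K) ^ a.length * B (a ++ x :: c) := by
  induction a using List.reverseRecOn with
  | nil => intro x c; simp [shuffles]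
  | append_singleton a x' ih =>
    intro x c
    have h0 := hal (a ++ [x']).reverse (x :: c) (by simp) (by simp)
    simp only [List.reverse_append, List.reverse_singleton, List.singleton_append] at h0
    rw [shuffles_cons_cons, List.map_append, List.sum_append,
      List.map_map, List.map_map] at h0
    simp only [Function.comp_def] at h0
    have h1 := ih x' (x :: c)
    rw [List.reverse_append]
    simp only [List.reverse_singleton, List.singleton_append, List.length_append,
      List.length_singleton]
    have h3 : ((shuffles (x' :: a.reverse) c).map (fun l => B (x :: l))).sum
        = - ((-1:K) ^ a.length * B (a ++ x' :: x :: c)) := by linear_combination h0 - h1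
    rw [h3, pow_succ]
    have : (a ++ [x']) ++ x :: c = a ++ x' :: x :: c := by simp
    rw [this]; ring

lemma mantar_of_alternal (B : List K → K) (hal : Alternal B) (w : List K) (hw : w ≠ []) :
    B w.reverse = (-1:K) ^ (w.length + 1) * B w := by
  obtain ⟨a, x, rfl⟩ : ∃ a x, w = a ++ [x] :=
    ⟨w.dropLast, w.getLast hw, (List.dropLast_concat_getLast hw).symm⟩
  have h := telescope B hal a x []
  rw [shuffles_nil_right] at h
  simp only [List.map_cons, List.map_nil, List.sum_cons, List.sum_nil, add_zero] at h
  rw [List.reverse_append]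
  simp only [List.reverse_singleton, List.singleton_append]
  rw [h]
  have : ((a ++ [x]).length + 1) = a.length + 2 := by simp
  rw [this, pow_succ, pow_succ]
  ring

lemma swapUargs_length (w : List K) : (swapUargs w).length = w.length := by
  simp [swapUargs]

lemma swapVargs_length (w : List K) : (swapVargs w).length = w.length := by
  simp [swapVargs]

lemma swapVargs_getElem (u : List K) (i : ℕ) {h : i < (swapVargs u).length} :
    (swapVargs u)[i] = (u.take (u.length - i)).sum := by
  simp [swapVargs]

lemma sum_take_one (u : List K) (h : 0 < u.length) : (u.take 1).sum = u[0] := by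
  have := List.sum_take_succ u 0 h
  simpa using this

lemma swapU_swapV (u : List K) : swapUargs (swapVargs u) = u := by
  apply List.ext_getElem (by simp [swapUargs_length, swapVargs_length])
  intro i h1 h2
  simp only [swapUargs, List.getElem_zipWith]
  rcases i with _ | j
  · rw [List.getElem_cons_zero, sub_zero, List.getElem_reverse, swapVargs_getElem]
    simp only [swapVargs_length]
    have e1 : u.length - (u.length - 1 - 0) = 1 := by omega
    rw [e1, sum_take_one u h2]
  · rw [List.getElem_cons_succ, List.getElem_reverse, List.getElem_reverse,
      swapVargs_getElem, swapVargs_getElem]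
    have hu : j + 1 < u.length := h2
    simp only [swapVargs_length]
    have e1 : u.length - (u.length - 1 - (j+1)) = j + 2 := by omega
    have e2 : u.length - (u.length - 1 - j) = j + 1 := by omega
    rw [e1, e2, List.sum_take_succ u (j+1) hu]
    ring

lemma swapU_rev_swapV (u : List K) (hu : u ≠ []) :
    (swapUargs (swapVargs u).reverse).reverse
      = u.tail.map (fun y => -y) ++ [u.sum] := by
  have hr : 0 < u.length := List.length_pos_iff.2 hu
  apply List.ext_getElem
  · simp [swapUargs_length, swapVargs_length]
    omega
  intro i h1 h2
  have hi : i < u.length := by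
    simpa [swapUargs_length, swapVargs_length] using h1
  rw [List.getElem_reverse]
  simp only [swapUargs_length, List.length_reverse, swapVargs_length]
  simp only [swapUargs, List.getElem_zipWith, List.reverse_reverse]
  by_cases hc : i = u.length - 1
  · subst hc
    simp only [show u.length - 1 - (u.length - 1) = 0 from by omega]
    rw [List.getElem_cons_zero, sub_zero, swapVargs_getElem]
    simp only [Nat.sub_zero, List.take_length]
    rw [List.getElem_append_right (by simp)]
    simp
  · have hi' : i < u.length - 1 := by omega
    simp only [show u.length - 1 - i = (u.length - 2 - i) + 1 from by omega]
    rw [List.getElem_cons_succ, swapVargs_getElem, swapVargs_getElem]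
    have e1 : u.length - ((u.length - 2 - i) + 1) = i + 1 := by omega
    have e2 : u.length - (u.length - 2 - i) = i + 2 := by omega
    rw [e1, e2, List.sum_take_succ u (i+1) (by omega)]
    rw [List.getElem_append_left (by simp; omega)]
    rw [List.getElem_map]
    rw [List.getElem_tail]
    ring

lemma star_key (A C : List K → K) (hal : Alternal A) (hC : IsConstantMould C)
    (hswapal : Alternal (fun w => swapUV A w + C w)) (u : List K) (hu : u ≠ []) :
    A (u.tail.map (fun y => -y) ++ [u.sum])
      = A u + (1 - (-1:K) ^ (u.length + 1)) * C u := by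
  set v := swapVargs u with hv_def
  have hvlen : v.length = u.length := swapVargs_length u
  have hv : v ≠ [] := by
    intro h
    apply hu
    rw [← List.length_eq_zero_iff, ← hvlen, h, List.length_nil]
  set e : K := (-1:K) ^ (u.length + 1) with he_def
  have he : e * e = 1 := by
    rw [he_def, ← pow_add]
    exact Even.neg_one_pow ⟨u.length + 1, by ring⟩
  set X : K := A (swapUargs v.reverse) with hX_def
  -- mantar for swap A + C at word v.reverse
  have h2 := mantar_of_alternal (fun w => swapUV A w + C w) hswapal v.reverse
    (by simp [hv])
  simp only [List.reverse_reverse, List.length_reverse] at h2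
  have hCv : C v = C u := hC v u hvlen
  have hCvr : C v.reverse = C u := hC v.reverse u (by simp [hvlen])
  have hswv : swapUV A v = A u := by
    rw [swapUV, hv_def, swapU_swapV]
  rw [hswv, hCv, hvlen, hCvr] at h2
  have h2' : A u + C u = e * (X + C u) := by
    rw [h2, he_def, hX_def, swapUV]
  -- mantar for A at word swapUargs v.reverse
  have hzne : swapUargs v.reverse ≠ [] := by
    intro h
    apply hu
    have := congrArg List.length h
    simp only [swapUargs_length, List.length_reverse, hvlen, List.length_nil] at this
    exact List.length_eq_zero_iff.1 this
  have h3 := mantar_of_alternal A hal (swapUargs v.reverse) hzne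
  rw [swapUargs_length, List.length_reverse, hvlen] at h3
  have h3' : A ((swapUargs v.reverse).reverse) = e * X := by
    rw [h3, he_def, hX_def]
  have hL : A (u.tail.map (fun y => -y) ++ [u.sum])
      = A ((swapUargs v.reverse).reverse) := by
    rw [hv_def, swapU_rev_swapV u hu]
  rw [hL, h3']
  have hX2 : X = e * (A u) + e * (C u) - C u := by
    linear_combination (-e) * h2' + (-(X + C u)) * he
  rw [hX2]
  linear_combination (A u + C u) * he

lemma star (A C : List K → K) (hal : Alternal A) (hC : IsConstantMould C)
    (hswapal : Alternal (fun w => swapUV A w + C w)) (u : List K) (hu : u ≠ []) :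
    A (u.tail.map (fun y => -y) ++ [u.sum]) = A u := by
  have hr : 0 < u.length := List.length_pos_iff.2 hu
  have hz := star_key A C hal hC hswapal (List.replicate u.length (0:K))
    (by intro h
        have h2 := congrArg List.length h
        rw [List.length_replicate, List.length_nil] at h2
        omega)
  have hrep : ((List.replicate u.length (0:K)).tail.map (fun y => -y)
      ++ [(List.replicate u.length (0:K)).sum]) = List.replicate u.length (0:K) := by
    simp [List.tail_replicate, List.map_replicate]
    rw [show [(0:K)] = List.replicate 1 (0:K) from rfl, ← List.replicate_add]
    congr 1
    omega
  rw [hrep] at hz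
  simp only [List.length_replicate] at hz
  have hCz : (1 - (-1:K) ^ (u.length + 1)) * C (List.replicate u.length (0:K)) = 0 := by
    linear_combination -hz
  have hCu : C u = C (List.replicate u.length (0:K)) := hC _ _ (by simp)
  rw [star_key A C hal hC hswapal u hu, hCu, hCz, add_zero]

lemma sum_map_neg (l : List K) : (l.map (fun y => -y)).sum = -l.sum := by
  induction l with
  | nil => simp
  | cons a t ih => simp only [List.map_cons, List.sum_cons, ih]; ring

/-- a mould in ARI_{al*al} (alternal, swap alternal up to a constant-valued
mould, even in depth 1) is invariant under `neg ∘ push`. -/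
theorem alstaral_negpush_invariant (A C : List K → K)
    (hA0 : A [] = 0) (hal : Alternal A)
    (hC : IsConstantMould C)
    (hswapal : Alternal (fun w => swapUV A w + C w))
    (heven : ∀ x : K, A [-x] = A [x]) :
    negM (pushM A) = A := by
  funext u
  cases u with
  | nil => simp [negM, pushM]
  | cons x t =>
    have hlast : (x::t).sum - ((x::t).dropLast).sum
        = (x::t).getLast (List.cons_ne_nil x t) := by
      conv_lhs => rw [← List.dropLast_concat_getLast (List.cons_ne_nil x t)]
      rw [List.sum_append]
      simp
    have e1 : negM (pushM A) (x::t)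
        = A ((x::t).sum :: ((x::t).dropLast.map (fun y => -y))) := by
      show pushM A ((x::t).map (fun y => -y)) = _
      rw [List.map_cons]
      simp only [pushM]
      congr 1
      congr 1
      · rw [← List.map_cons, sum_map_neg, neg_neg]
      · exact (List.map_dropLast (f := fun y : K => -y) (l := x::t)).symm
    set w : List K := (x::t).sum :: ((x::t).dropLast.map (fun y => -y)) with hw_def
    have hstar := star A C hal hC hswapal w (List.cons_ne_nil _ _)
    have h2 : w.tail.map (fun y => -y) ++ [w.sum] = x :: t := by
      show (((x::t).dropLast.map (fun y => -y)).map (fun y => -y)) ++ [w.sum] = x :: t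
      rw [List.map_map]
      have hmm : ((x::t).dropLast).map ((fun y : K => -y) ∘ (fun y => -y))
          = (x::t).dropLast := by
        simp
      rw [hmm]
      have hsum : w.sum = (x::t).getLast (List.cons_ne_nil x t) := by
        show ((x::t).sum + ((x::t).dropLast.map (fun y => -y)).sum) = _
        rw [sum_map_neg, ← hlast]
        ring
      rw [hsum]
      exact List.dropLast_concat_getLast _
    rw [h2] at hstar
    rw [e1, ← hstar]
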